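/- Let V : ℝⁿ → ℝ≥0 be continuously differentiable along a solution x(t) of an ODE, and suppose V̇(x(t)) ≤ −c₁ V(x(t))^{p} − c₂ V(x(t))^{q} with c₁, c₂ > 0, 0 < p < 1 < q. Then V(x(t)) = 0 for all t ≥ T* where T* = 1/(c₁(1−p)) + 1/(c₂(q−1)). -/

import Mathlib

theorem stmt_11 (n : ℕ) (V : EuclideanSpace ℝ (Fin n) → ℝ) (x : ℝ → EuclideanSpace ℝ (Fin n))
    (c₁ c₂ p q : ℝ) (hc₁ : 0 < c₁) (hc₂ : 0 < c₂) (hp₀ : 0 < p) (hp₁ : p < 1) (hq : 1 < q)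
    (hVnonneg : ∀ z, 0 ≤ V z)
    (d : ℝ → ℝ)
    (hderiv : ∀ t ≥ 0, HasDerivAt (fun τ => V (x τ)) (d t) t)
    (hineq : ∀ t ≥ 0, d t ≤ -c₁ * (V (x t)) ^ p - c₂ * (V (x t)) ^ q) :
    ∀ t ≥ 1 / (c₁ * (1 - p)) + 1 / (c₂ * (q - 1)), V (x t) = 0 := by
  have h1p : (0:ℝ) < 1 - p := by linarith
  have hq1 : (0:ℝ) < q - 1 := by linarith
  set W : ℝ → ℝ := fun τ => V (x τ) with hWdef
  have hWnn : ∀ s, 0 ≤ W s := fun s => hVnonneg _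
  have hD : ∀ s ≥ (0:ℝ), HasDerivAt W (d s) s := hderiv
  have hI : ∀ s ≥ (0:ℝ), d s ≤ -c₁ * W s ^ p - c₂ * W s ^ q := hineq
  have ha : (0:ℝ) < 1 / (c₁ * (1 - p)) := by positivity
  have hb : (0:ℝ) < 1 / (c₂ * (q - 1)) := by positivity
  set t₁ : ℝ := 1 / (c₂ * (q - 1)) with ht₁
  set T : ℝ := 1 / (c₁ * (1 - p)) + 1 / (c₂ * (q - 1)) with hT
  have hTpos : 0 < T := by positivity
  have ht₁T : t₁ ≤ T := by rw [hT, ht₁]; linarith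
  have ht₁0 : 0 ≤ t₁ := hb.le
  -- continuity of W on [0, ∞)
  have hcont : ContinuousOn W (Set.Ici (0:ℝ)) := fun s hs =>
    ((hD s hs).continuousAt).continuousWithinAt
  -- d is nonpositive on [0, ∞)
  have hdnonpos : ∀ s ≥ (0:ℝ), d s ≤ 0 := by
    intro s hs
    have h1 := hI s hs
    have h2 : (0:ℝ) ≤ W s ^ p := Real.rpow_nonneg (hWnn _) _
    have h3 : (0:ℝ) ≤ W s ^ q := Real.rpow_nonneg (hWnn _) _
    nlinarith
  -- W is antitone on [0, ∞)
  have hanti : AntitoneOn W (Set.Ici (0:ℝ)) := by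
    apply antitoneOn_of_deriv_nonpos (convex_Ici 0) hcont
    · intro s hs
      rw [interior_Ici] at hs
      exact ((hD s hs.le).differentiableAt).differentiableWithinAt
    · intro s hs
      rw [interior_Ici] at hs
      rw [(hD s hs.le).deriv]
      exact hdnonpos s hs.le
  -- main claim: W T = 0
  have hWT : W T = 0 := by
    by_contra hne
    have hm : 0 < W T := lt_of_le_of_ne (hWnn _) (Ne.symm hne)
    have hpos : ∀ s ∈ Set.Icc (0:ℝ) T, 0 < W s := fun s hs =>
      lt_of_lt_of_le hm (hanti hs.1 hTpos.le hs.2)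
    -- Phase 1: W t₁ ≤ 1
    have hWt₁ : W t₁ ≤ 1 := by
      by_contra hW1
      push_neg at hW1
      have hmono : MonotoneOn (fun s => W s ^ (1 - q) - c₂ * (q - 1) * s)
          (Set.Icc (0:ℝ) t₁) := by
        apply monotoneOn_of_deriv_nonneg (convex_Icc 0 t₁)
        · apply ContinuousOn.sub
          · apply ContinuousOn.rpow_const (hcont.mono Set.Icc_subset_Ici_self)
            intro s hs
            exact Or.inl (ne_of_gt (hpos s ⟨hs.1, hs.2.trans ht₁T⟩))
          · exact ((continuous_const.mul continuous_id).continuousOn)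
        · intro s hs
          rw [interior_Icc] at hs
          have hs0 : (0:ℝ) ≤ s := hs.1.le
          have hWpos : 0 < W s := hpos s ⟨hs0, hs.2.le.trans ht₁T⟩
          have hy := (hD s hs0).rpow_const (p := 1 - q) (Or.inl hWpos.ne')
          have hlin : HasDerivAt (fun τ : ℝ => c₂ * (q - 1) * τ) (c₂ * (q - 1)) s := by
            simpa using (hasDerivAt_id s).const_mul (c₂ * (q - 1))
          exact ((hy.sub hlin).differentiableAt).differentiableWithinAt
        · intro s hs
          rw [interior_Icc] at hs
          have hs0 : (0:ℝ) ≤ s := hs.1.le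
          have hWpos : 0 < W s := hpos s ⟨hs0, hs.2.le.trans ht₁T⟩
          have hy := (hD s hs0).rpow_const (p := 1 - q) (Or.inl hWpos.ne')
          have hlin : HasDerivAt (fun τ : ℝ => c₂ * (q - 1) * τ) (c₂ * (q - 1)) s := by
            simpa using (hasDerivAt_id s).const_mul (c₂ * (q - 1))
          rw [(hy.fun_sub hlin).deriv]
          -- goal : 0 ≤ (1-q) * W s ^ (1-q-1) * d s - c₂*(q-1)*1
          have hAq : W s ^ (1 - q - 1) * W s ^ q = 1 := by
            rw [← Real.rpow_add hWpos]
            have : 1 - q - 1 + q = 0 := by ring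
            rw [this, Real.rpow_zero]
          have hApos : 0 < W s ^ (1 - q - 1) := Real.rpow_pos_of_pos hWpos _
          have hd := hI s hs0
          have h1 : (q - 1) * W s ^ (1 - q - 1) * (c₁ * W s ^ p + c₂ * W s ^ q)
              ≤ (q - 1) * W s ^ (1 - q - 1) * (-(d s)) := by
            apply mul_le_mul_of_nonneg_left _ (by positivity)
            linarith
          have h2 : (q - 1) * W s ^ (1 - q - 1) * (c₁ * W s ^ p + c₂ * W s ^ q)
              = (q - 1) * c₁ * (W s ^ (1 - q - 1) * W s ^ p)
                + (q - 1) * c₂ * (W s ^ (1 - q - 1) * W s ^ q) := by ring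
          have h3 : 0 ≤ (q - 1) * c₁ * (W s ^ (1 - q - 1) * W s ^ p) := by
            have : (0:ℝ) ≤ W s ^ p := Real.rpow_nonneg (hWnn _) _
            positivity
          rw [h2, hAq, mul_one] at h1
          linarith
      have hg := hmono ⟨le_refl 0, ht₁0⟩ ⟨ht₁0, le_refl t₁⟩ ht₁0
      simp only [mul_zero, sub_zero] at hg
      have hce : c₂ * (q - 1) * t₁ = 1 := by
        rw [ht₁]; field_simp
      rw [hce] at hg
      have hW0pos : 0 < W 0 := hpos 0 ⟨le_refl 0, hTpos.le⟩
      have h4 : 0 < W 0 ^ (1 - q) := Real.rpow_pos_of_pos hW0pos _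
      have h5 : W t₁ ^ (1 - q) < 1 :=
        Real.rpow_lt_one_of_one_lt_of_neg hW1 (by linarith)
      linarith
    -- Phase 2: contradiction
    have hanti2 : AntitoneOn (fun s => W s ^ (1 - p) + c₁ * (1 - p) * s)
        (Set.Icc t₁ T) := by
      apply antitoneOn_of_deriv_nonpos (convex_Icc t₁ T)
      · apply ContinuousOn.add
        · apply ContinuousOn.rpow_const
          · exact hcont.mono (fun s hs => le_trans ht₁0 hs.1)
          · intro s hs
            exact Or.inl (ne_of_gt (hpos s ⟨le_trans ht₁0 hs.1, hs.2⟩))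
        · exact ((continuous_const.mul continuous_id).continuousOn)
      · intro s hs
        rw [interior_Icc] at hs
        have hs0 : (0:ℝ) ≤ s := le_trans ht₁0 hs.1.le
        have hWpos : 0 < W s := hpos s ⟨hs0, hs.2.le⟩
        have hy := (hD s hs0).rpow_const (p := 1 - p) (Or.inl hWpos.ne')
        have hlin : HasDerivAt (fun τ : ℝ => c₁ * (1 - p) * τ) (c₁ * (1 - p)) s := by
          simpa using (hasDerivAt_id s).const_mul (c₁ * (1 - p))
        exact ((hy.add hlin).differentiableAt).differentiableWithinAt
      · intro s hs
        rw [interior_Icc] at hs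
        have hs0 : (0:ℝ) ≤ s := le_trans ht₁0 hs.1.le
        have hWpos : 0 < W s := hpos s ⟨hs0, hs.2.le⟩
        have hy := (hD s hs0).rpow_const (p := 1 - p) (Or.inl hWpos.ne')
        have hlin : HasDerivAt (fun τ : ℝ => c₁ * (1 - p) * τ) (c₁ * (1 - p)) s := by
          simpa using (hasDerivAt_id s).const_mul (c₁ * (1 - p))
        rw [(hy.fun_add hlin).deriv]
        -- goal : (1-p) * W s ^ (1-p-1) * d s + c₁*(1-p)*1 ≤ 0
        have hBq : W s ^ (1 - p - 1) * W s ^ p = 1 := by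
          rw [← Real.rpow_add hWpos]
          have : 1 - p - 1 + p = 0 := by ring
          rw [this, Real.rpow_zero]
        have hBpos : 0 < W s ^ (1 - p - 1) := Real.rpow_pos_of_pos hWpos _
        have hd := hI s hs0
        have h1 : (1 - p) * W s ^ (1 - p - 1) * (d s)
            ≤ (1 - p) * W s ^ (1 - p - 1) * (-(c₁ * W s ^ p) - c₂ * W s ^ q) := by
          apply mul_le_mul_of_nonneg_left _ (by positivity)
          linarith
        have h2 : (1 - p) * W s ^ (1 - p - 1) * (-(c₁ * W s ^ p) - c₂ * W s ^ q)
            = -((1 - p) * c₁ * (W s ^ (1 - p - 1) * W s ^ p))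
              - (1 - p) * c₂ * (W s ^ (1 - p - 1) * W s ^ q) := by ring
        have h3 : 0 ≤ (1 - p) * c₂ * (W s ^ (1 - p - 1) * W s ^ q) := by
          have : (0:ℝ) ≤ W s ^ q := Real.rpow_nonneg (hWnn _) _
          positivity
        rw [h2, hBq, mul_one] at h1
        linarith
    have hg := hanti2 ⟨le_refl t₁, ht₁T⟩ ⟨ht₁T, le_refl T⟩ ht₁T
    simp only at hg
    have hce : c₁ * (1 - p) * T - c₁ * (1 - p) * t₁ = 1 := by
      rw [hT, ht₁]; field_simp; ring
    have h6 : W t₁ ^ (1 - p) ≤ 1 := Real.rpow_le_one (hWnn _) hWt₁ h1p.le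
    have h7 : 0 < W T ^ (1 - p) := Real.rpow_pos_of_pos hm _
    linarith
  intro t ht
  have h1 : W t ≤ W T := hanti hTpos.le (le_trans hTpos.le ht) ht
  have := hWnn t
  change W t = 0
  linarith [hWT ▸ h1]
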